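/- arXiv:2301.05834 — 3 statements merged into one kernel-verified Lean document; each statement's English description precedes it below -/
import Mathlib

section
/- Let T be a perfect tiling subset of G for parameter n. Then: (1) Σ_{g∈G} m₂(g) = 4n² + 4n + 1; (2) |G| = 2n² + 1 (the sets X_i = {g ∈ G : m₂(g) = i} partition G); and (3) 2·|{g ∈ G : m₂(g) ≥ 1}| = 2 − |T* ∩ T^(2)*| + Σ_{g ∈ G, m₂(g) ≥ 1} (m₂(g) − 1)(m₂(g) − 2). -/
/-- `T` is a perfect tiling subset of `G` for parameter `n`:
`|G| = 2n²+1`, `|T| = 2n+1`, `e ∈ T`, `T = T⁽⁻¹⁾`, and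
`T·T = 2·G + T⁽²⁾ + (2n-2)·e` in the integral group ring `ℤ[G]`. -/
def IsPerfectTilingSubset (n : ℕ) {G : Type} [CommGroup G] [Fintype G] [DecidableEq G]
    (T : Finset G) : Prop :=
  Fintype.card G = 2 * n ^ 2 + 1 ∧
  T.card = 2 * n + 1 ∧
  (1 : G) ∈ T ∧
  T = T.image (·⁻¹) ∧
  (∑ t ∈ T, MonoidAlgebra.single t (1 : ℤ)) * (∑ t ∈ T, MonoidAlgebra.single t (1 : ℤ))
    = 2 * (∑ g : G, MonoidAlgebra.single g (1 : ℤ))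
      + (∑ t ∈ T, MonoidAlgebra.single (t ^ 2) (1 : ℤ))
      + MonoidAlgebra.single (1 : G) (2 * (n : ℤ) - 2)

/-- `m₂ T g`: the number of pairs `(t₁,t₂) ∈ T × T` with `t₁·t₂² = g`,
i.e. the coefficient of `g` in the group-ring product `T·T⁽²⁾`. -/
def m2 {G : Type} [CommGroup G] [DecidableEq G] (T : Finset G) (g : G) : ℕ :=
  ((T ×ˢ T).filter (fun p => p.1 * p.2 ^ 2 = g)).card

section Aux
set_option linter.unusedSectionVars false
variable {G : Type} [CommGroup G] [Fintype G] [DecidableEq G]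

/-- counting membership in an injective image, as an indicator sum -/
lemma aux_count_image (s : Finset G) (f : G → G) (hf : Function.Injective f) (x : G) :
    (∑ a ∈ s, if f a = x then (1 : ℤ) else 0) = if x ∈ s.image f then 1 else 0 := by
  by_cases hx : x ∈ s.image f
  · obtain ⟨a, ha, rfl⟩ := Finset.mem_image.1 hx
    rw [if_pos hx, Finset.sum_eq_single a]
    · simp
    · intro b hb hba
      simp [hf.ne hba]
    · intro h; exact absurd ha h
  · rw [if_neg hx, Finset.sum_eq_zero]
    intro b hb
    rw [if_neg]
    intro h
    exact hx (Finset.mem_image.2 ⟨b, hb, h⟩)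

/-- fiberwise decomposition of a pair sum -/
lemma aux_pair (T : Finset G) (F : G → ℤ) :
    ∑ t ∈ T, ∑ s ∈ T, F (t * s)
      = ∑ d : G, (∑ t ∈ T, ∑ s ∈ T, if t * s = d then (1:ℤ) else 0) * F d := by
  have key : ∀ t s : G, F (t * s) = ∑ d : G, if t * s = d then F d else 0 := by
    intro t s
    rw [Finset.sum_ite_eq Finset.univ (t*s) F, if_pos (Finset.mem_univ _)]
  calc ∑ t ∈ T, ∑ s ∈ T, F (t * s)
      = ∑ t ∈ T, ∑ s ∈ T, ∑ d : G, if t * s = d then F d else 0 := by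
        simp_rw [← key]
    _ = ∑ d : G, ∑ t ∈ T, ∑ s ∈ T, (if t * s = d then F d else 0) := by
        have h1 : ∀ t : G, (∑ s ∈ T, ∑ d : G, if t * s = d then F d else 0)
            = ∑ d : G, ∑ s ∈ T, if t * s = d then F d else 0 := fun t => Finset.sum_comm
        rw [Finset.sum_congr rfl fun t _ => h1 t, Finset.sum_comm]
    _ = ∑ d : G, (∑ t ∈ T, ∑ s ∈ T, if t * s = d then (1:ℤ) else 0) * F d := by
        refine Finset.sum_congr rfl fun d _ => ?_
        rw [Finset.sum_mul]
        refine Finset.sum_congr rfl fun t _ => ?_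
        rw [Finset.sum_mul]
        refine Finset.sum_congr rfl fun s _ => ?_
        rw [boole_mul]

lemma aux_translate (w : G → ℤ) (a : G) : ∑ g : G, w (a * g) = ∑ g : G, w g :=
  Fintype.sum_bijective (fun g => a * g) (Group.mulLeft_bijective a) _ _ (fun _ => rfl)

lemma aux_translate' (w : G → ℤ) (a : G) : ∑ g : G, w (g * a) = ∑ g : G, w g :=
  Fintype.sum_bijective (fun g => g * a) (Group.mulRight_bijective a) _ _ (fun _ => rfl)

end Aux

theorem stmt4 (n : ℕ) (hn : 3 ≤ n) {G : Type} [CommGroup G] [Fintype G] [DecidableEq G]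
    (T : Finset G) (hT : IsPerfectTilingSubset n T) :
    (∑ g : G, m2 T g) = 4 * n ^ 2 + 4 * n + 1 ∧
    Fintype.card G = 2 * n ^ 2 + 1 ∧
    (2 : ℤ) * ((Finset.univ.filter (fun g : G => 1 ≤ m2 T g)).card)
      = 2 - (((T.erase 1) ∩ ((T.image (· ^ 2)).erase 1)).card : ℤ)
        + ∑ g ∈ Finset.univ.filter (fun g : G => 1 ≤ m2 T g),
            ((m2 T g : ℤ) - 1) * ((m2 T g : ℤ) - 2) := by
  classical
  obtain ⟨hcard, hTcard, h1T, hTinv, hring⟩ := hT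
  -- squaring is injective since |G| is odd
  have hcop : (Nat.card G).Coprime 2 := by
    rw [Nat.card_eq_fintype_card, hcard, Nat.coprime_two_right]
    exact ⟨n ^ 2, by ring⟩
  have hsq : Function.Injective (fun x : G => x ^ 2) := fun a b hab =>
    (powCoprime hcop).injective (by simpa using hab)
  set U : Finset G := T.image (· ^ 2) with hU
  set w : G → ℤ := fun g => if g ∈ U then 1 else 0 with hw
  have hUcard : U.card = 2 * n + 1 := by
    rw [hU, Finset.card_image_of_injective _ hsq, hTcard]
  have h1U : (1 : G) ∈ U := Finset.mem_image.2 ⟨1, h1T, one_pow 2⟩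
  have hUmem : ∀ x : G, x ^ 2 ∈ U ↔ x ∈ T := by
    intro x
    constructor
    · intro hx
      obtain ⟨a, ha, h2⟩ := Finset.mem_image.1 hx
      have : a = x := hsq h2
      rwa [← this]
    · intro hx; exact Finset.mem_image_of_mem _ hx
  have hwsum : ∑ g : G, w g = (2 * n + 1 : ℤ) := by
    rw [hw]
    rw [Finset.sum_ite_mem, Finset.univ_inter, Finset.sum_const, hUcard]
    push_cast; ring
  have hwU : ∀ {u : G}, u ∈ U → w u = 1 := by
    intro u hu; rw [hw]; simp [hu]
  have hwUsum : ∑ u ∈ U, w u = (2 * n + 1 : ℤ) := by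
    rw [Finset.sum_congr rfl fun u hu => hwU hu, Finset.sum_const, hUcard]
    push_cast; ring
  -- symmetry of T
  have hinvsum : ∀ F : G → ℤ, (∑ s ∈ T, F s⁻¹) = ∑ s ∈ T, F s := by
    intro F
    conv_rhs => rw [hTinv]
    rw [Finset.sum_image (fun a _ b _ h => inv_injective h)]
  -- the coefficient identity from the group-ring equation
  have hc : ∀ g : G, (∑ t ∈ T, ∑ s ∈ T, if t * s = g then (1:ℤ) else 0)
      = 2 + w g + (if g = 1 then 2 * (n:ℤ) - 2 else 0) := by
    intro g
    rw [Finset.sum_mul_sum, two_mul] at hring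
    simp only [MonoidAlgebra.single_mul_single, one_mul] at hring
    have h2 : ((∑ i ∈ T, ∑ j ∈ T, Finsupp.single (i * j) (1:ℤ)) : G →₀ ℤ)
        = (∑ g : G, Finsupp.single g 1) + (∑ g : G, Finsupp.single g 1)
          + (∑ t ∈ T, Finsupp.single (t ^ 2) 1) + Finsupp.single (1 : G) (2 * (n : ℤ) - 2) := by
      simp only [← MonoidAlgebra.ofCoeff_single, ← MonoidAlgebra.ofCoeff_sum,
        ← MonoidAlgebra.ofCoeff_add, MonoidAlgebra.ofCoeff_inj] at hring
      exact hring
    have h1 := DFunLike.congr_fun h2 g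
    simp only [Finsupp.finset_sum_apply, Finsupp.add_apply, Finsupp.single_apply,
      Finset.sum_ite_eq', Finset.mem_univ, if_true] at h1
    rw [h1, hw]
    rw [aux_count_image T (fun x => x ^ 2) hsq g, ← hU]
    rcases eq_or_ne g 1 with rfl | hg
    · simp only [if_pos rfl]
      ring
    · rw [if_neg (show ¬(1:G) = g from fun h => hg h.symm), if_neg hg]
      ring
  -- m2 as an indicator sum
  have hm2 : ∀ g : G, (m2 T g : ℤ) = ∑ t ∈ T, w (t⁻¹ * g) := by
    intro g
    have h0 : (m2 T g : ℤ) = ∑ t ∈ T, ∑ s ∈ T, if t * s ^ 2 = g then (1:ℤ) else 0 := by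
      rw [m2, Finset.card_filter, Finset.sum_product]
      push_cast
      rfl
    rw [h0]
    refine Finset.sum_congr rfl fun t _ => ?_
    have hcond : ∀ s : G, (t * s ^ 2 = g) = (s ^ 2 = t⁻¹ * g) := by
      intro s
      rw [eq_inv_mul_iff_mul_eq]
    simp_rw [hcond]
    rw [aux_count_image T (fun x => x ^ 2) hsq (t⁻¹ * g), hw]
  -- total sum of m2
  have hsum1 : ∑ g : G, (m2 T g : ℤ) = 4 * n ^ 2 + 4 * n + 1 := by
    simp_rw [hm2]
    rw [Finset.sum_comm]
    rw [Finset.sum_congr rfl fun t _ => (aux_translate w t⁻¹).trans hwsum,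
      Finset.sum_const, hTcard]
    push_cast; ring
  -- indicator-sum collapsing
  have key4 : ∀ F : G → ℤ, ∑ h : G, w h * F h = ∑ u ∈ U, F u := by
    intro F
    simp only [hw, boole_mul]
    rw [Finset.sum_ite_mem, Finset.univ_inter]
  -- cardinality of T ∩ U
  have hk : ((T ∩ U).card : ℤ) = ((T.erase 1 ∩ U.erase 1).card : ℤ) + 1 := by
    have h1 : T.erase 1 ∩ U.erase 1 = (T ∩ U).erase 1 := by
      ext x
      simp only [Finset.mem_erase, Finset.mem_inter]
      tauto
    have h2 : (1:G) ∈ T ∩ U := Finset.mem_inter.2 ⟨h1T, h1U⟩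
    have h3 : 1 ≤ (T ∩ U).card := Finset.card_pos.2 ⟨1, h2⟩
    rw [h1, Finset.card_erase_of_mem h2, Nat.cast_sub h3]
    push_cast; ring
  -- the triple sum
  have hQ : ∑ u ∈ U, ∑ d ∈ U, w (d * u)
      = 2 * (2 * (n:ℤ) + 1) + ((T ∩ U).card : ℤ) + (2 * (n:ℤ) - 2) := by
    have e1 : ∑ u ∈ U, ∑ d ∈ U, w (d * u) = ∑ b ∈ T, ∑ a ∈ T, w (a ^ 2 * b ^ 2) := by
      rw [hU, Finset.sum_image (fun a _ b _ h => hsq h)]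
      refine Finset.sum_congr rfl fun b _ => ?_
      rw [Finset.sum_image (fun a _ b _ h => hsq h)]
    rw [e1]
    have e2 : ∀ b ∈ T, ∀ a ∈ T, w (a ^ 2 * b ^ 2) = if b * a ∈ T then (1:ℤ) else 0 := by
      intro b _ a _
      rw [← mul_pow, hw]
      simp only []
      rw [if_congr (hUmem (a * b)) rfl rfl, mul_comm a b]
    rw [Finset.sum_congr rfl fun b hb => Finset.sum_congr rfl fun a ha => e2 b hb a ha]
    rw [aux_pair T (fun d => if d ∈ T then (1:ℤ) else 0)]
    simp_rw [mul_boole]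
    rw [Finset.sum_ite_mem, Finset.univ_inter]
    rw [Finset.sum_congr rfl fun d _ => hc d]
    rw [Finset.sum_add_distrib, Finset.sum_add_distrib, Finset.sum_const, hTcard]
    have e3 : ∑ d ∈ T, w d = ((T ∩ U).card : ℤ) := by
      rw [hw, Finset.sum_ite_mem, Finset.sum_const]
      push_cast; ring
    have e4 : (∑ d ∈ T, if d = 1 then 2 * (n:ℤ) - 2 else 0) = 2 * (n:ℤ) - 2 := by
      rw [Finset.sum_ite_eq' T 1 (fun _ => 2 * (n:ℤ) - 2), if_pos h1T]
    rw [e3, e4]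
    push_cast; ring
  -- the sum of squares of m2
  have hS : ∑ g : G, (m2 T g : ℤ) * (m2 T g : ℤ)
      = 12 * n ^ 2 + 12 * n + 1 + ((T.erase 1 ∩ U.erase 1).card : ℤ) := by
    have step : ∑ g : G, (m2 T g : ℤ) * (m2 T g : ℤ)
        = ∑ u ∈ U, ∑ d : G, (2 + w d + (if d = 1 then 2 * (n:ℤ) - 2 else 0)) * w (d * u) := by
      calc ∑ g : G, (m2 T g : ℤ) * (m2 T g : ℤ)
          = ∑ g : G, (∑ t ∈ T, w (t⁻¹ * g)) * (∑ s ∈ T, w (s⁻¹ * g)) := by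
            refine Finset.sum_congr rfl fun g _ => ?_
            rw [hm2 g]
        _ = ∑ g : G, ∑ t ∈ T, ∑ s ∈ T, w (t⁻¹ * g) * w (s⁻¹ * g) := by
            refine Finset.sum_congr rfl fun g _ => ?_
            rw [Finset.sum_mul_sum]
        _ = ∑ t ∈ T, ∑ s ∈ T, ∑ g : G, w (t⁻¹ * g) * w (s⁻¹ * g) := by
            rw [Finset.sum_comm]
            exact Finset.sum_congr rfl fun t _ => Finset.sum_comm
        _ = ∑ t ∈ T, ∑ s ∈ T, ∑ h : G, w h * w (s⁻¹ * (t * h)) := by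
            refine Finset.sum_congr rfl fun t _ => Finset.sum_congr rfl fun s _ => ?_
            rw [← aux_translate (fun g => w (t⁻¹ * g) * w (s⁻¹ * g)) t]
            simp only [inv_mul_cancel_left]
        _ = ∑ t ∈ T, ∑ s ∈ T, ∑ u ∈ U, w (s⁻¹ * (t * u)) := by
            refine Finset.sum_congr rfl fun t _ => Finset.sum_congr rfl fun s _ => ?_
            exact key4 (fun h => w (s⁻¹ * (t * h)))
        _ = ∑ t ∈ T, ∑ u ∈ U, ∑ s ∈ T, w (s⁻¹ * (t * u)) :=
            Finset.sum_congr rfl fun t _ => Finset.sum_comm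
        _ = ∑ t ∈ T, ∑ u ∈ U, ∑ s ∈ T, w (s * (t * u)) := by
            refine Finset.sum_congr rfl fun t _ => Finset.sum_congr rfl fun u _ => ?_
            exact hinvsum (fun s => w (s * (t * u)))
        _ = ∑ u ∈ U, ∑ s ∈ T, ∑ t ∈ T, w ((s * t) * u) := by
            rw [Finset.sum_comm]
            refine Finset.sum_congr rfl fun u _ => ?_
            rw [Finset.sum_comm]
            refine Finset.sum_congr rfl fun s _ => Finset.sum_congr rfl fun t _ => ?_
            rw [← mul_assoc]
        _ = ∑ u ∈ U, ∑ d : G, (∑ s ∈ T, ∑ t ∈ T, if s * t = d then (1:ℤ) else 0) * w (d * u) :=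
            Finset.sum_congr rfl fun u _ => aux_pair T (fun d => w (d * u))
        _ = ∑ u ∈ U, ∑ d : G, (2 + w d + (if d = 1 then 2 * (n:ℤ) - 2 else 0)) * w (d * u) := by
            refine Finset.sum_congr rfl fun u _ => Finset.sum_congr rfl fun d _ => ?_
            rw [hc d]
    rw [step]
    have inner : ∀ u ∈ U, ∑ d : G, (2 + w d + (if d = 1 then 2 * (n:ℤ) - 2 else 0)) * w (d * u)
        = 2 * (2 * (n:ℤ) + 1) + (∑ d ∈ U, w (d * u)) + (2 * (n:ℤ) - 2) := by
      intro u hu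
      simp only [add_mul, ite_mul, zero_mul]
      rw [Finset.sum_add_distrib, Finset.sum_add_distrib]
      have p1 : ∑ d : G, 2 * w (d * u) = 2 * (2 * (n:ℤ) + 1) := by
        rw [← Finset.mul_sum, aux_translate' w u, hwsum]
      have p2 : ∑ d : G, w d * w (d * u) = ∑ d ∈ U, w (d * u) :=
        key4 (fun d => w (d * u))
      have p3 : (∑ d : G, if d = 1 then (2 * (n:ℤ) - 2) * w (d * u) else 0)
          = 2 * (n:ℤ) - 2 := by
        rw [Finset.sum_ite_eq' Finset.univ (1:G) (fun d => (2 * (n:ℤ) - 2) * w (d * u)),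
          if_pos (Finset.mem_univ _), one_mul, hwU hu, mul_one]
      rw [p1, p2, p3]
    rw [Finset.sum_congr rfl inner]
    rw [Finset.sum_add_distrib, Finset.sum_add_distrib, Finset.sum_const, Finset.sum_const,
      hUcard, hQ, hk]
    push_cast; ring
  -- part 1
  have part1 : (∑ g : G, m2 T g) = 4 * n ^ 2 + 4 * n + 1 := by
    have := hsum1
    push_cast at this
    exact_mod_cast this
  refine ⟨part1, hcard, ?_⟩
  -- part 3
  have hcardZ : ((Fintype.card G : ℕ) : ℤ) = 2 * (n:ℤ) ^ 2 + 1 := by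
    rw [hcard]; push_cast; ring
  have hsplit := Finset.sum_filter_add_sum_filter_not Finset.univ
    (fun g : G => 1 ≤ m2 T g) (fun g => ((m2 T g : ℤ) - 1) * ((m2 T g : ℤ) - 2))
  have hnot : ∑ g ∈ Finset.univ.filter (fun g : G => ¬ 1 ≤ m2 T g),
      ((m2 T g : ℤ) - 1) * ((m2 T g : ℤ) - 2)
      = 2 * ((Finset.univ.filter (fun g : G => ¬ 1 ≤ m2 T g)).card : ℤ) := by
    have hzero : ∀ g ∈ Finset.univ.filter (fun g : G => ¬ 1 ≤ m2 T g),
        ((m2 T g : ℤ) - 1) * ((m2 T g : ℤ) - 2) = 2 := by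
      intro g hg
      have h0 : m2 T g = 0 := by
        have := (Finset.mem_filter.1 hg).2
        omega
      rw [h0]
      norm_num
    rw [Finset.sum_congr rfl hzero, Finset.sum_const, nsmul_eq_mul]
    ring
  have hcards : ((Finset.univ.filter (fun g : G => 1 ≤ m2 T g)).card : ℤ)
      + ((Finset.univ.filter (fun g : G => ¬ 1 ≤ m2 T g)).card : ℤ)
      = ((Fintype.card G : ℕ) : ℤ) := by
    rw [← Finset.card_univ]
    exact_mod_cast congrArg (Nat.cast (R := ℤ))
      (Finset.card_filter_add_card_filter_not (s := Finset.univ)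
        (p := fun g : G => 1 ≤ m2 T g))
  have hexpand : ∑ g : G, ((m2 T g : ℤ) - 1) * ((m2 T g : ℤ) - 2)
      = (∑ g : G, (m2 T g : ℤ) * (m2 T g : ℤ)) - 3 * (∑ g : G, (m2 T g : ℤ))
        + 2 * ((Fintype.card G : ℕ) : ℤ) := by
    have e : ∀ g : G, ((m2 T g : ℤ) - 1) * ((m2 T g : ℤ) - 2)
        = (m2 T g : ℤ) * (m2 T g : ℤ) - 3 * (m2 T g : ℤ) + 2 := fun g => by ring
    rw [Finset.sum_congr rfl fun g _ => e g]
    rw [Finset.sum_add_distrib, Finset.sum_sub_distrib, ← Finset.mul_sum,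
      Finset.sum_const, Finset.card_univ]
    push_cast; ring
  rw [hS, hsum1, hcardZ] at hexpand
  rw [hnot] at hsplit
  linarith [hsplit, hcards, hexpand]
end

section
/- Let T be a perfect tiling subset of G for parameter n. Then the number of elements t ∈ T with t³ = e equals |T* ∩ T^(2)*| + 1; that is, the identity e appears exactly 2β + 1 times in the multiset T^(3) = {t³ : t ∈ T}, where 2β = |T* ∩ T^(2)*|. -/
lemma perfect_key_aux (n : ℕ) {G : Type} [CommGroup G] [Fintype G] [DecidableEq G]
    (T : Finset G) (h1 : (1:G) ∈ T)
    (hmul : (∑ t ∈ T, MonoidAlgebra.single t (1 : ℤ)) * (∑ t ∈ T, MonoidAlgebra.single t (1 : ℤ))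
    = 2 * (∑ g : G, MonoidAlgebra.single g (1 : ℤ))
      + (∑ t ∈ T, MonoidAlgebra.single (t ^ 2) (1 : ℤ))
      + MonoidAlgebra.single (1 : G) (2 * (n : ℤ) - 2)) :
    ∀ g ∈ T, g ≠ 1 → ∀ a ∈ T, ∀ b ∈ T, a ≠ 1 → b ≠ 1 → a * b = g → a = b := by
  intro g hg hg1 a ha b hb ha1 hb1 hab
  have hc := congrArg (fun f : MonoidAlgebra ℤ G => f.coeff g) hmul
  simp only at hc
  -- LHS
  have hL : ((∑ t ∈ T, MonoidAlgebra.single t (1 : ℤ)) * (∑ t ∈ T, MonoidAlgebra.single t (1 : ℤ))).coeff g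
      = ∑ x ∈ T, ∑ y ∈ T, (if x * y = g then (1:ℤ) else 0) := by
    rw [Finset.sum_mul_sum]
    simp only [MonoidAlgebra.single_mul_single, mul_one]
    rw [MonoidAlgebra.coeff_sum, Finset.sum_apply']
    congr 1; ext x
    rw [MonoidAlgebra.coeff_sum, Finset.sum_apply']
    congr 1; ext y
    rw [MonoidAlgebra.single_apply]
  have hR : ((2:MonoidAlgebra ℤ G) * (∑ h : G, MonoidAlgebra.single h (1 : ℤ))
      + (∑ t ∈ T, MonoidAlgebra.single (t ^ 2) (1 : ℤ))
      + MonoidAlgebra.single (1 : G) (2 * (n : ℤ) - 2)).coeff g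
      = 2 + ∑ t ∈ T, (if t ^ 2 = g then (1:ℤ) else 0) := by
    rw [MonoidAlgebra.coeff_add, MonoidAlgebra.coeff_add, Finsupp.add_apply, Finsupp.add_apply]
    have e1 : ((2:MonoidAlgebra ℤ G) * (∑ h : G, MonoidAlgebra.single h (1 : ℤ))).coeff g = 2 := by
      rw [two_mul, MonoidAlgebra.coeff_add, Finsupp.add_apply, MonoidAlgebra.coeff_sum, Finset.sum_apply']
      simp [MonoidAlgebra.single_apply]
    have e2 : (∑ t ∈ T, MonoidAlgebra.single (t ^ 2) (1 : ℤ)).coeff g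
        = ∑ t ∈ T, (if t ^ 2 = g then (1:ℤ) else 0) := by
      rw [MonoidAlgebra.coeff_sum, Finset.sum_apply']
      congr 1; ext t; rw [MonoidAlgebra.single_apply]
    have e3 : (MonoidAlgebra.single (1 : G) (2 * (n : ℤ) - 2)).coeff g = 0 := by
      rw [MonoidAlgebra.single_apply, if_neg (Ne.symm hg1)]
    rw [e1, e2, e3, add_zero]
  rw [hL, hR] at hc
  -- now split off the 1's
  set S := T.erase 1 with hS
  have hTS : T = insert 1 S := (Finset.insert_erase h1).symm
  have hgS : g ∈ S := Finset.mem_erase.2 ⟨hg1, hg⟩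
  have haS : a ∈ S := Finset.mem_erase.2 ⟨ha1, ha⟩
  have hbS : b ∈ S := Finset.mem_erase.2 ⟨hb1, hb⟩
  have h1S : (1:G) ∉ S := Finset.notMem_erase _ _
  rw [hTS] at hc
  rw [Finset.sum_insert h1S] at hc           -- outer LHS sum
  rw [Finset.sum_insert h1S] at hc           -- RHS t^2 sum (or inner); handle generically below
  rw [Finset.sum_insert h1S] at hc           -- RHS t^2 sum
  have c1 : (if (1:G) * 1 = g then (1:ℤ) else 0) + ∑ y ∈ S, (if 1 * y = g then (1:ℤ) else 0) = 1 := by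
    simp only [one_mul]
    rw [if_neg (Ne.symm hg1), Finset.sum_ite_eq' S g (fun _ => (1:ℤ)), if_pos hgS, zero_add]
  have c2 : ∀ x ∈ S, ∑ y ∈ insert 1 S, (if x * y = g then (1:ℤ) else 0)
      = (if x = g then (1:ℤ) else 0) + ∑ y ∈ S, (if x * y = g then (1:ℤ) else 0) := by
    intro x hx
    rw [Finset.sum_insert h1S, mul_one]
  have c3 : ∑ x ∈ S, ((if x = g then (1:ℤ) else 0) + ∑ y ∈ S, (if x * y = g then (1:ℤ) else 0))
      = 1 + ∑ x ∈ S, ∑ y ∈ S, (if x * y = g then (1:ℤ) else 0) := by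
    rw [Finset.sum_add_distrib, Finset.sum_ite_eq' S g (fun _ => (1:ℤ)), if_pos hgS]
  rw [c1, Finset.sum_congr rfl c2, c3, one_pow, if_neg (Ne.symm hg1)] at hc
  have key : ∑ x ∈ S, ∑ y ∈ S, (if x * y = g then (1:ℤ) else 0)
      = ∑ x ∈ S, (if x * x = g then (1:ℤ) else 0) := by
    have hd : ∀ t ∈ S, (if t ^ 2 = g then (1:ℤ) else 0) = (if t * t = g then (1:ℤ) else 0) := by
      intro t _; rw [sq]
    rw [← Finset.sum_congr rfl hd]
    linarith [hc]
  -- P = Σ diag + Σ offdiag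
  have split : ∀ x ∈ S, ∑ y ∈ S, (if x * y = g then (1:ℤ) else 0)
      = (if x * x = g then (1:ℤ) else 0) + ∑ y ∈ S.erase x, (if x * y = g then (1:ℤ) else 0) := by
    intro x hx
    exact (Finset.add_sum_erase S (fun y => if x * y = g then (1:ℤ) else 0) hx).symm
  rw [Finset.sum_congr rfl split, Finset.sum_add_distrib] at key
  -- key : diag + Q = diag  =>  Q = 0
  have hQ : ∑ x ∈ S, ∑ y ∈ S.erase x, (if x * y = g then (1:ℤ) else 0) = 0 := by linarith
  by_contra hne
  have hbmem : b ∈ S.erase a := Finset.mem_erase.2 ⟨fun h => hne h.symm, hbS⟩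
  have nn : ∀ x ∈ S, (0:ℤ) ≤ ∑ y ∈ S.erase x, (if x * y = g then (1:ℤ) else 0) := by
    intro x _; positivity
  have h0 : ∑ y ∈ S.erase a, (if a * y = g then (1:ℤ) else 0) = 0 :=
    (Finset.sum_eq_zero_iff_of_nonneg nn).1 hQ a haS
  have nn2 : ∀ y ∈ S.erase a, (0:ℤ) ≤ (if a * y = g then (1:ℤ) else 0) := by
    intro y _; positivity
  have := (Finset.sum_eq_zero_iff_of_nonneg nn2).1 h0 b hbmem
  rw [if_pos hab] at this
  exact one_ne_zero this


theorem stmt5 (n : ℕ) (hn : 3 ≤ n) {G : Type} [CommGroup G] [Fintype G] [DecidableEq G]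
    (T : Finset G) (hT : IsPerfectTilingSubset n T) :
    (T.filter (fun t => t ^ 3 = 1)).card
      = ((T.erase 1) ∩ ((T.image (· ^ 2)).erase 1)).card + 1 := by
  obtain ⟨hG, hcard, h1, hsym, hmul⟩ := hT
  have hinv : ∀ t ∈ T, t⁻¹ ∈ T := by
    intro t ht
    have : t⁻¹ ∈ T.image (·⁻¹) := Finset.mem_image_of_mem _ ht
    rwa [← hsym] at this
  have key := perfect_key_aux n T h1 hmul
  have hset : T.filter (fun t => t ^ 3 = 1)
      = insert (1:G) ((T.erase 1) ∩ ((T.image (· ^ 2)).erase 1)) := by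
    ext t
    simp only [Finset.mem_filter, Finset.mem_insert, Finset.mem_inter, Finset.mem_erase,
      Finset.mem_image]
    constructor
    · rintro ⟨ht, ht3⟩
      by_cases h : t = 1
      · exact Or.inl h
      · refine Or.inr ⟨⟨h, ht⟩, h, t⁻¹, hinv t ht, ?_⟩
        have h2 : t * t ^ 2 = 1 := by rw [← pow_succ']; exact ht3
        have hi : t⁻¹ = t ^ 2 := inv_eq_of_mul_eq_one_right h2
        rw [hi, ← pow_mul]
        rw [show (2 * 2) = 4 from rfl, pow_succ, ht3, one_mul]
    · rintro (h | ⟨⟨ht1, ht⟩, -, s, hs, hst⟩)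
      · subst h; exact ⟨h1, one_pow 3⟩
      · have hs1 : s ≠ 1 := by
          rintro rfl
          rw [one_pow] at hst
          exact ht1 hst.symm
        have hsinv : s⁻¹ ∈ T := hinv s hs
        have hsinv1 : s⁻¹ ≠ 1 := inv_ne_one.2 hs1
        have hmulrel : t * s⁻¹ = s := by rw [← hst]; group
        have hts := key s hs hs1 t ht s⁻¹ hsinv ht1 hsinv1 hmulrel
        refine ⟨ht, ?_⟩
        have hs3 : s ^ 3 = 1 := by
          calc s ^ 3 = s ^ 2 * s := pow_succ s 2
            _ = t * s := by rw [hst]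
            _ = s⁻¹ * s := by rw [hts]
            _ = 1 := inv_mul_cancel s
        rw [← hst, ← pow_mul, show (2 * 3) = 3 * 2 from rfl, pow_mul, hs3, one_pow]
  rw [hset, Finset.card_insert_of_notMem]
  simp
end

section
/- Let n ≥ 3 be an integer with n ≡ 0 (mod 3), and let T be a perfect tiling subset of G for parameter n. Then: (1) the sets Y_i = {g ∈ G : m₄(g) = i} partition G, so Σ_i |Y_i| = 2n² + 1; (2) Σ_{g∈G} m₄(g) = 4n² + 4n + 1; and (3) 2·|{g ∈ G : m₄(g) ≥ 1}| = 2 − |T* ∩ T^(4)*| + Σ_{g ∈ G, m₄(g) ≥ 1} (m₄(g) − 1)(m₄(g) − 2). -/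
/-- `m4 T g`: the number of pairs `(t₁,t₂) ∈ T × T` with `t₁·t₂⁴ = g`,
i.e. the coefficient of `g` in the group-ring product `T·T⁽⁴⁾`. -/
def m4 {G : Type} [CommGroup G] [DecidableEq G] (T : Finset G) (g : G) : ℕ :=
  ((T ×ˢ T).filter (fun p => p.1 * p.2 ^ 4 = g)).card

open Finset

section Aux
variable {G : Type} [DecidableEq G]

omit [DecidableEq G] in
lemma aux_filt_inj {f : G → G} (hf : Function.Injective f) (T : Finset G) (g : G)
    [DecidableEq G] :
    (T.filter (fun t => f t = g)).card = if g ∈ T.image f then 1 else 0 := by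
  split_ifs with h
  · obtain ⟨t, ht, rfl⟩ := Finset.mem_image.mp h
    rw [show T.filter (fun x => f x = f t) = {t} from ?_, Finset.card_singleton]
    ext x
    simp only [Finset.mem_filter, Finset.mem_singleton]
    constructor
    · rintro ⟨-, hx⟩; exact hf hx
    · rintro rfl; exact ⟨ht, rfl⟩
  · rw [Finset.card_eq_zero, Finset.filter_eq_empty_iff]
    intro x hx hfx
    exact h (Finset.mem_image.mpr ⟨x, hx, hfx⟩)

variable {G : Type} [CommGroup G] [Fintype G] [DecidableEq G]

lemma aux_coeff (n : ℕ) (T : Finset G)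
    (hring : (∑ t ∈ T, MonoidAlgebra.single t (1 : ℤ)) * (∑ t ∈ T, MonoidAlgebra.single t (1 : ℤ))
    = 2 * (∑ g : G, MonoidAlgebra.single g (1 : ℤ))
      + (∑ t ∈ T, MonoidAlgebra.single (t ^ 2) (1 : ℤ))
      + MonoidAlgebra.single (1 : G) (2 * (n : ℤ) - 2)) (g : G) :
    (((T ×ˢ T).filter (fun p => p.1 * p.2 = g)).card : ℤ)
      = 2 + (T.filter (fun t => t ^ 2 = g)).card + (if g = 1 then 2*(n:ℤ)-2 else 0) := by
  rw [Finset.sum_mul_sum] at hring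
  simp only [MonoidAlgebra.single_mul_single, one_mul] at hring
  rw [← Finset.sum_product', two_mul] at hring
  have h := congrArg (fun f : MonoidAlgebra ℤ G => f.coeff g) hring
  simp only [MonoidAlgebra.coeff_add, MonoidAlgebra.coeff_sum, MonoidAlgebra.coeff_single] at h
  rw [Finsupp.add_apply, Finsupp.add_apply, Finsupp.add_apply,
    Finset.sum_apply', Finset.sum_apply', Finset.sum_apply'] at h
  simp only [Finsupp.single_apply] at h
  rw [Finset.sum_boole, Finset.sum_boole, Finset.sum_boole] at h
  simp only [Finset.filter_eq', Finset.mem_univ, if_true, Finset.card_singleton] at h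
  rw [h]
  have he : (if (1:G) = g then 2*(n:ℤ)-2 else 0) = (if g = 1 then 2*(n:ℤ)-2 else 0) := by
    simp [eq_comm]
  rw [he]
  push_cast
  ring

lemma aux_part3 (n : ℕ) (T : Finset G)
    (hcard : Fintype.card G = 2 * n ^ 2 + 1)
    (hTcard : T.card = 2 * n + 1)
    (h1T : (1:G) ∈ T)
    (hinvT : ∀ x : G, x ∈ T → x⁻¹ ∈ T)
    (hinj2 : Function.Injective (fun x : G => x ^ 2))
    (hinj4 : Function.Injective (fun x : G => x ^ 4))
    (hbij2 : Function.Bijective (fun x : G => x ^ 2))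
    (hc : ∀ g : G, (((T ×ˢ T).filter (fun p => p.1 * p.2 = g)).card : ℤ)
      = 2 + (if g ∈ T.image (fun x : G => x ^ 2) then (1:ℤ) else 0)
        + (if g = 1 then 2*(n:ℤ)-2 else 0))
    (part2 : (∑ g : G, m4 T g) = 4 * n ^ 2 + 4 * n + 1) :
    (2 : ℤ) * ((Finset.univ.filter (fun g : G => 1 ≤ m4 T g)).card)
      = 2 - (((T.erase 1) ∩ ((T.image (· ^ 4)).erase 1)).card : ℤ)
        + ∑ g ∈ Finset.univ.filter (fun g : G => 1 ≤ m4 T g),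
            ((m4 T g : ℤ) - 1) * ((m4 T g : ℤ) - 2) := by
  -- abbreviations
  have key : ∀ a b cc d : G, (a * b ^ 4 = cc * d ^ 4) ↔ (a * cc⁻¹ = (d * b⁻¹) ^ 4) := by
    intro a b cc d
    rw [mul_pow, inv_pow, ← div_eq_mul_inv, ← div_eq_mul_inv, div_eq_div_iff_mul_eq_mul,
      mul_comm (d ^ 4) cc]
  -- quadruple count, version 1
  have hQ1 : (((T ×ˢ T) ×ˢ (T ×ˢ T)).filter
      (fun q => q.1.1 * q.1.2 ^ 4 = q.2.1 * q.2.2 ^ 4)).card = ∑ g : G, m4 T g * m4 T g := by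
    rw [Finset.card_eq_sum_card_fiberwise
      (f := fun q : (G × G) × (G × G) => q.1.1 * q.1.2 ^ 4) (t := Finset.univ)
      (fun q _ => Finset.mem_univ _)]
    refine Finset.sum_congr rfl (fun g _ => ?_)
    rw [show ((((T ×ˢ T) ×ˢ (T ×ˢ T)).filter
          (fun q => q.1.1 * q.1.2 ^ 4 = q.2.1 * q.2.2 ^ 4)).filter
          (fun q => q.1.1 * q.1.2 ^ 4 = g))
        = ((T ×ˢ T).filter (fun p => p.1 * p.2 ^ 4 = g))
            ×ˢ ((T ×ˢ T).filter (fun p => p.1 * p.2 ^ 4 = g)) from ?_]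
    · rw [Finset.card_product]; rfl
    · ext q
      simp only [Finset.mem_filter, Finset.mem_product]
      constructor
      · rintro ⟨⟨⟨h1, h2⟩, h3⟩, h4⟩
        exact ⟨⟨h1, h4⟩, ⟨h2, by rw [← h3, h4]⟩⟩
      · rintro ⟨⟨h1, h4⟩, ⟨h2, h5⟩⟩
        exact ⟨⟨⟨h1, h2⟩, by rw [h4, h5]⟩, h4⟩
  -- bijection to primed version
  have hQQ' : (((T ×ˢ T) ×ˢ (T ×ˢ T)).filter
      (fun q => q.1.1 * q.1.2 ^ 4 = q.2.1 * q.2.2 ^ 4)).card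
      = (((T ×ˢ T) ×ˢ (T ×ˢ T)).filter
      (fun q => q.1.1 * q.1.2 = (q.2.1 * q.2.2) ^ 4)).card := by
    apply Finset.card_nbij' (i := fun q => ((q.1.1, q.2.1⁻¹), (q.2.2, q.1.2⁻¹)))
      (j := fun q => ((q.1.1, q.2.2⁻¹), (q.1.2⁻¹, q.2.1)))
    · rintro ⟨⟨t1, t2⟩, ⟨t3, t4⟩⟩ hq
      simp only [Finset.mem_coe, Finset.mem_filter, Finset.mem_product] at hq ⊢
      obtain ⟨⟨⟨h1, h2⟩, ⟨h3, h4⟩⟩, heq⟩ := hq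
      refine ⟨⟨⟨h1, hinvT _ h3⟩, ⟨h4, hinvT _ h2⟩⟩, ?_⟩
      exact (key t1 t2 t3 t4).mp heq
    · rintro ⟨⟨a, b⟩, ⟨cc, d⟩⟩ hq
      simp only [Finset.mem_coe, Finset.mem_filter, Finset.mem_product] at hq ⊢
      obtain ⟨⟨⟨h1, h2⟩, ⟨h3, h4⟩⟩, heq⟩ := hq
      refine ⟨⟨⟨h1, hinvT _ h4⟩, ⟨hinvT _ h2, h3⟩⟩, ?_⟩
      refine (key a d⁻¹ b⁻¹ cc).mpr ?_
      simpa using heq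
    · rintro ⟨⟨t1, t2⟩, ⟨t3, t4⟩⟩ _; simp
    · rintro ⟨⟨a, b⟩, ⟨cc, d⟩⟩ _; simp
  -- quadruple count, version 2
  have hQ2 : (((T ×ˢ T) ×ˢ (T ×ˢ T)).filter
      (fun q => q.1.1 * q.1.2 = (q.2.1 * q.2.2) ^ 4)).card
      = ∑ h : G, ((T ×ˢ T).filter (fun p => p.1 * p.2 = h ^ 4)).card
          * ((T ×ˢ T).filter (fun p => p.1 * p.2 = h)).card := by
    rw [Finset.card_eq_sum_card_fiberwise
      (f := fun q : (G × G) × (G × G) => q.2.1 * q.2.2) (t := Finset.univ)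
      (fun q _ => Finset.mem_univ _)]
    refine Finset.sum_congr rfl (fun h _ => ?_)
    rw [show ((((T ×ˢ T) ×ˢ (T ×ˢ T)).filter
          (fun q => q.1.1 * q.1.2 = (q.2.1 * q.2.2) ^ 4)).filter
          (fun q => q.2.1 * q.2.2 = h))
        = ((T ×ˢ T).filter (fun p => p.1 * p.2 = h ^ 4))
            ×ˢ ((T ×ˢ T).filter (fun p => p.1 * p.2 = h)) from ?_]
    · rw [Finset.card_product]
    · ext q
      simp only [Finset.mem_filter, Finset.mem_product]
      constructor
      · rintro ⟨⟨⟨h1, h2⟩, h3⟩, h4⟩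
        exact ⟨⟨h1, by rw [h3, h4]⟩, ⟨h2, h4⟩⟩
      · rintro ⟨⟨h1, h3⟩, ⟨h2, h4⟩⟩
        exact ⟨⟨⟨h1, h2⟩, by rw [h3, h4]⟩, h4⟩
  -- coefficient at h^4
  have hc4 : ∀ h : G, (((T ×ˢ T).filter (fun p => p.1 * p.2 = h ^ 4)).card : ℤ)
      = 2 + (if h ^ 2 ∈ T then (1:ℤ) else 0) + (if h = 1 then 2*(n:ℤ)-2 else 0) := by
    intro h
    have e1 : (h ^ 4 ∈ T.image (fun x : G => x ^ 2)) ↔ (h ^ 2 ∈ T) := by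
      constructor
      · intro hh
        obtain ⟨t, ht, h2⟩ := Finset.mem_image.mp hh
        have h44 : (h ^ 2) ^ 2 = h ^ 4 := by group
        have : t = h ^ 2 := hinj2 (by rw [← h44] at h2; exact h2)
        rwa [← this]
      · intro hh
        exact Finset.mem_image.mpr ⟨h ^ 2, hh, by group⟩
    have e2 : (h ^ 4 = 1) ↔ (h = 1) := by
      constructor
      · intro hh
        exact hinj4 (by simp [hh])
      · rintro rfl; exact one_pow 4
    rw [hc (h ^ 4)]
    simp only [e1, e2]
  -- sums of indicators
  have S1 : ∑ h : G, (if h ∈ T.image (fun x : G => x ^ 2) then (1:ℤ) else 0)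
      = 2*(n:ℤ)+1 := by
    rw [Finset.sum_boole, Finset.filter_mem_eq_inter, Finset.univ_inter,
      Finset.card_image_of_injective _ hinj2, hTcard]
    push_cast; ring
  have S2 : ∑ h : G, (if h ^ 2 ∈ T then (1:ℤ) else 0) = 2*(n:ℤ)+1 := by
    rw [Finset.sum_boole]
    have : (Finset.univ.filter (fun h : G => h ^ 2 ∈ T)).card = T.card := by
      apply Finset.card_nbij (i := fun h : G => h ^ 2)
      · intro a ha; simpa using (Finset.mem_filter.mp ha).2
      · exact fun a _ b _ hab => hinj2 hab
      · intro t ht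
        obtain ⟨h, rfl⟩ := hbij2.2 t
        refine ⟨h, ?_, rfl⟩
        simpa using ht
    rw [this, hTcard]; push_cast; ring
  have S3 : ∑ h : G, ((if h ∈ T.image (fun x : G => x ^ 2) then (1:ℤ) else 0)
        * (if h ^ 2 ∈ T then (1:ℤ) else 0))
      = ((T ∩ T.image (fun x : G => x ^ 4)).card : ℤ) := by
    have e : ∀ h : G, (if h ∈ T.image (fun x : G => x ^ 2) then (1:ℤ) else 0)
        * (if h ^ 2 ∈ T then (1:ℤ) else 0)
        = if (h ∈ T.image (fun x : G => x ^ 2) ∧ h ^ 2 ∈ T) then (1:ℤ) else 0 := by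
      intro h
      by_cases h1 : h ∈ T.image (fun x : G => x ^ 2) <;>
        by_cases h2 : h ^ 2 ∈ T <;> simp [h1, h2]
    rw [Finset.sum_congr rfl (fun h _ => e h), Finset.sum_boole]
    norm_cast
    have step1 : (Finset.univ.filter
        (fun h : G => h ∈ T.image (fun x : G => x ^ 2) ∧ h ^ 2 ∈ T)).card
        = (T.filter (fun t => t ^ 4 ∈ T)).card := by
      symm
      apply Finset.card_nbij (i := fun t : G => t ^ 2)
      · intro a ha
        obtain ⟨haT, ha4⟩ := Finset.mem_filter.mp ha
        simp only [Finset.mem_coe, Finset.mem_filter, Finset.mem_univ, true_and]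
        constructor
        · exact Finset.mem_image.mpr ⟨a, haT, rfl⟩
        · have : (a ^ 2) ^ 2 = a ^ 4 := by group
          rw [this]; exact ha4
      · exact fun a _ b _ hab => hinj2 hab
      · intro h hh
        simp only [Finset.coe_filter, Set.mem_setOf_eq, Finset.mem_univ, true_and] at hh
        obtain ⟨hh1, h2⟩ := hh
        obtain ⟨t, ht, rfl⟩ := Finset.mem_image.mp hh1
        refine ⟨t, ?_, rfl⟩
        simp only [Finset.coe_filter, Set.mem_setOf_eq]
        refine ⟨ht, ?_⟩
        have : (t ^ 2) ^ 2 = t ^ 4 := by group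
        rwa [this] at h2
    have step2 : (T.filter (fun t => t ^ 4 ∈ T)).card
        = (T ∩ T.image (fun x : G => x ^ 4)).card := by
      apply Finset.card_nbij (i := fun t : G => t ^ 4)
      · intro a ha
        obtain ⟨haT, ha4⟩ := Finset.mem_filter.mp ha
        exact Finset.mem_inter.mpr ⟨ha4, Finset.mem_image.mpr ⟨a, haT, rfl⟩⟩
      · exact fun a _ b _ hab => hinj4 hab
      · intro x hx
        obtain ⟨hxT, hxI⟩ := Finset.mem_inter.mp hx
        obtain ⟨t, ht, rfl⟩ := Finset.mem_image.mp hxI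
        refine ⟨t, ?_, rfl⟩
        simp only [Finset.coe_filter, Set.mem_setOf_eq]
        exact ⟨ht, hxT⟩
    rw [step1, step2]
  -- pointwise expansion
  have hpt : ∀ h : G, (((T ×ˢ T).filter (fun p => p.1 * p.2 = h ^ 4)).card : ℤ)
        * (((T ×ˢ T).filter (fun p => p.1 * p.2 = h)).card : ℤ)
      = 4 + 2*(if h ∈ T.image (fun x : G => x ^ 2) then (1:ℤ) else 0)
          + 2*(if h ^ 2 ∈ T then (1:ℤ) else 0)
          + (if h ∈ T.image (fun x : G => x ^ 2) then (1:ℤ) else 0)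
            * (if h ^ 2 ∈ T then (1:ℤ) else 0)
          + (if h = 1 then (2*(n:ℤ)-2)*(2*(n:ℤ)+4) else 0) := by
    intro h
    rw [hc4 h, hc h]
    by_cases h1 : h = 1
    · subst h1
      have hA : (1:G) ∈ T.image (fun x : G => x ^ 2) :=
        Finset.mem_image.mpr ⟨1, h1T, one_pow 2⟩
      have hB : ((1:G) ^ 2 : G) ∈ T := by rwa [one_pow]
      simp only [hA, hB, if_pos rfl, if_true]
      ring
    · simp only [h1, if_false]
      ring
  -- the full sum
  have hsum : ∑ h : G, (((T ×ˢ T).filter (fun p => p.1 * p.2 = h ^ 4)).card : ℤ)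
        * (((T ×ˢ T).filter (fun p => p.1 * p.2 = h)).card : ℤ)
      = 12*(n:ℤ)^2 + 12*(n:ℤ) + ((T ∩ T.image (fun x : G => x ^ 4)).card : ℤ) := by
    rw [Finset.sum_congr rfl (fun h _ => hpt h)]
    rw [Finset.sum_add_distrib, Finset.sum_add_distrib, Finset.sum_add_distrib,
      Finset.sum_add_distrib, ← Finset.mul_sum, ← Finset.mul_sum]
    rw [S1, S2, S3, Finset.sum_const, Finset.card_univ, hcard]
    rw [Finset.sum_ite_eq' Finset.univ (1:G)
      (fun _ => (2*(n:ℤ)-2)*(2*(n:ℤ)+4))]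
    simp only [Finset.mem_univ, if_true]
    push_cast
    ring
  -- m4 squared sum
  have hNN : ∑ g : G, m4 T g * m4 T g
      = ∑ h : G, ((T ×ˢ T).filter (fun p => p.1 * p.2 = h ^ 4)).card
          * ((T ×ˢ T).filter (fun p => p.1 * p.2 = h)).card := by
    rw [← hQ1, hQQ', hQ2]
  have hm2 : ∑ g : G, (m4 T g : ℤ) * (m4 T g : ℤ)
      = 12*(n:ℤ)^2 + 12*(n:ℤ) + ((T ∩ T.image (fun x : G => x ^ 4)).card : ℤ) := by
    have hc2 := congrArg (Nat.cast : ℕ → ℤ) hNN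
    push_cast at hc2
    rw [hc2]
    exact hsum
  have hm1 : ∑ g : G, (m4 T g : ℤ) = 4*(n:ℤ)^2 + 4*(n:ℤ) + 1 := by
    have hc2 := congrArg (Nat.cast : ℕ → ℤ) part2
    push_cast at hc2
    exact hc2
  -- intersection card
  have h1I : (1:G) ∈ T ∩ T.image (fun x : G => x ^ 4) :=
    Finset.mem_inter.mpr ⟨h1T, Finset.mem_image.mpr ⟨1, h1T, one_pow 4⟩⟩
  have hKset : (T.erase 1) ∩ ((T.image (· ^ 4)).erase 1)
      = (T ∩ T.image (fun x : G => x ^ 4)).erase 1 := by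
    ext x
    simp only [Finset.mem_erase, Finset.mem_inter]
    tauto
  have hK : (((T.erase 1) ∩ ((T.image (· ^ 4)).erase 1)).card : ℤ)
      = ((T ∩ T.image (fun x : G => x ^ 4)).card : ℤ) - 1 := by
    rw [hKset, Finset.card_erase_of_mem h1I]
    have hpos : 1 ≤ (T ∩ T.image (fun x : G => x ^ 4)).card :=
      Finset.card_pos.mpr ⟨1, h1I⟩
    push_cast [hpos]
    ring
  -- final assembly
  have hsplit := Finset.sum_filter_add_sum_filter_not Finset.univ
    (fun g : G => 1 ≤ m4 T g) (fun g => ((m4 T g : ℤ) - 1) * ((m4 T g : ℤ) - 2))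
  have hzero : ∑ g ∈ Finset.univ.filter (fun g : G => ¬ 1 ≤ m4 T g),
      ((m4 T g : ℤ) - 1) * ((m4 T g : ℤ) - 2)
      = 2 * ((Finset.univ.filter (fun g : G => ¬ 1 ≤ m4 T g)).card : ℤ) := by
    have e : ∀ g ∈ Finset.univ.filter (fun g : G => ¬ 1 ≤ m4 T g),
        ((m4 T g : ℤ) - 1) * ((m4 T g : ℤ) - 2) = 2 := by
      intro g hg
      have h0 : m4 T g = 0 := by
        have := (Finset.mem_filter.mp hg).2
        omega
      rw [h0]
      norm_num
    rw [Finset.sum_congr rfl e, Finset.sum_const, nsmul_eq_mul]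
    ring
  have hcards : ((Finset.univ.filter (fun g : G => 1 ≤ m4 T g)).card : ℤ)
      + ((Finset.univ.filter (fun g : G => ¬ 1 ≤ m4 T g)).card : ℤ)
      = 2*(n:ℤ)^2 + 1 := by
    have := Finset.card_filter_add_card_filter_not
      (s := (Finset.univ : Finset G)) (p := fun g : G => 1 ≤ m4 T g)
    rw [Finset.card_univ, hcard] at this
    have hc2 := congrArg (Nat.cast : ℕ → ℤ) this
    push_cast at hc2
    linarith [hc2]
  have huniv : ∑ g : G, ((m4 T g : ℤ) - 1) * ((m4 T g : ℤ) - 2)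
      = (∑ g : G, (m4 T g : ℤ) * (m4 T g : ℤ)) - 3*(∑ g : G, (m4 T g : ℤ))
        + 2*(2*(n:ℤ)^2 + 1) := by
    rw [Finset.sum_congr rfl (fun g _ => show ((m4 T g : ℤ) - 1) * ((m4 T g : ℤ) - 2)
      = (m4 T g : ℤ) * (m4 T g : ℤ) - 3*(m4 T g : ℤ) + 2 from by ring)]
    rw [Finset.sum_add_distrib, Finset.sum_sub_distrib, ← Finset.mul_sum,
      Finset.sum_const, Finset.card_univ, hcard]
    push_cast
    ring
  linarith [hsplit, hzero, hcards, huniv, hm1, hm2, hK]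

end Aux

theorem stmt13 (n : ℕ) (hn : 3 ≤ n) (hmod : n % 3 = 0)
    {G : Type} [CommGroup G] [Fintype G] [DecidableEq G]
    (T : Finset G) (hT : IsPerfectTilingSubset n T) :
    (∑ i ∈ Finset.range (4 * n ^ 2 + 4 * n + 2),
        (Finset.univ.filter (fun g : G => m4 T g = i)).card) = 2 * n ^ 2 + 1 ∧
    (∑ g : G, m4 T g) = 4 * n ^ 2 + 4 * n + 1 ∧
    (2 : ℤ) * ((Finset.univ.filter (fun g : G => 1 ≤ m4 T g)).card)
      = 2 - (((T.erase 1) ∩ ((T.image (· ^ 4)).erase 1)).card : ℤ)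
        + ∑ g ∈ Finset.univ.filter (fun g : G => 1 ≤ m4 T g),
            ((m4 T g : ℤ) - 1) * ((m4 T g : ℤ) - 2) := by
  obtain ⟨hcard, hTcard, h1T, hTinv, hring⟩ := hT
  have hinvT : ∀ x : G, x ∈ T → x⁻¹ ∈ T := by
    intro x hx
    rw [hTinv]
    exact Finset.mem_image_of_mem _ hx
  have hcop2 : (Nat.card G).Coprime 2 := by
    rw [Nat.card_eq_fintype_card, hcard, Nat.coprime_two_right]
    exact ⟨n ^ 2, by ring⟩
  have hcop4 : (Nat.card G).Coprime 4 := by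
    have h4 := hcop2.pow_right 2
    rwa [show (2:ℕ)^2 = 4 from rfl] at h4
  have hinj2 : Function.Injective (fun x : G => x ^ 2) := by
    have := (powCoprime hcop2).injective
    simpa [powCoprime] using this
  have hinj4 : Function.Injective (fun x : G => x ^ 4) := by
    have := (powCoprime hcop4).injective
    simpa [powCoprime] using this
  have hbij2 : Function.Bijective (fun x : G => x ^ 2) :=
    Finite.injective_iff_bijective.mp hinj2
  have hlt : ∀ g : G, m4 T g < 4 * n ^ 2 + 4 * n + 2 := by
    intro g
    have h1 : m4 T g ≤ (T ×ˢ T).card := Finset.card_filter_le _ _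
    rw [Finset.card_product, hTcard] at h1
    have h2 : (2 * n + 1) * (2 * n + 1) = 4 * n ^ 2 + 4 * n + 1 := by ring
    omega
  have part1 : (∑ i ∈ Finset.range (4 * n ^ 2 + 4 * n + 2),
      (Finset.univ.filter (fun g : G => m4 T g = i)).card) = 2 * n ^ 2 + 1 := by
    have e1 := Finset.card_eq_sum_card_fiberwise
      (f := fun g : G => m4 T g) (s := Finset.univ) (t := Finset.range (4 * n ^ 2 + 4 * n + 2))
      (fun g _ => Finset.mem_range.mpr (hlt g))
    rw [Finset.card_univ, hcard] at e1
    exact e1.symm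
  have part2 : (∑ g : G, m4 T g) = 4 * n ^ 2 + 4 * n + 1 := by
    have e2 := Finset.card_eq_sum_card_fiberwise
      (f := fun p : G × G => p.1 * p.2 ^ 4) (s := T ×ˢ T) (t := Finset.univ)
      (fun p _ => Finset.mem_univ _)
    rw [Finset.card_product, hTcard] at e2
    have h2 : (2 * n + 1) * (2 * n + 1) = 4 * n ^ 2 + 4 * n + 1 := by ring
    rw [h2] at e2
    simpa [m4] using e2.symm
  have hc : ∀ g : G, (((T ×ˢ T).filter (fun p => p.1 * p.2 = g)).card : ℤ)
      = 2 + (if g ∈ T.image (fun x : G => x ^ 2) then (1:ℤ) else 0)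
        + (if g = 1 then 2*(n:ℤ)-2 else 0) := by
    intro g
    rw [aux_coeff n T hring g]
    have h2 := aux_filt_inj hinj2 T g
    rw [h2]
    push_cast
    split_ifs <;> ring
  exact ⟨part1, part2, aux_part3 n T hcard hTcard h1T hinvT hinj2 hinj4 hbij2 hc part2⟩
end
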